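/- (Plücker relation, form (3) of Lemma 3.5) Let (Z^J) be Plücker coordinates of a point of G_{k,n} as antisymmetric minor functions of a k×n complex matrix. Then for any multi-indices J, K each of length k and any a, b ∈ {1,…,n}: Σ_{j ∈ J\K} Z^{ajJ} Z^{bjK} = −δ(a ∉ K)·Z^J·Z^{baK} + δ(a ∉ J)·Z^{baJ}·Z^K, where δ(P) = 1 if P holds and 0 otherwise. -/

import Mathlib

open Complex

/-- The vector space with basis `θ_S` indexed by subsets of `{1,…,n}`. -/
abbrev SpinModule (n : ℕ) : Type := Finset (Fin n) → ℂ

/-- The sign arising when reducing `θ_{iS}` to `± θ_{S Δ {i}}`. -/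
def cliffordSign {n : ℕ} (i : Fin n) (S : Finset (Fin n)) : ℂ :=
  (-1 : ℂ) ^ (S.filter (fun j => j < i)).card * (if i ∈ S then 1 else -1)

/-- The prepending operator determined by `e_i θ_I = θ_{iI}`. -/
def genR {n : ℕ} (i : Fin n) : SpinModule n →ₗ[ℂ] SpinModule n where
  toFun f := fun S => cliffordSign i S * f (symmDiff S {i})
  map_add' f g := by funext S; simp [mul_add]
  map_smul' c f := by funext S; simp [smul_eq_mul]; ring

/-- `θ_L` for an arbitrary multi-index (list) `L`, via `θ_L = e_{l₁} ⋯ e_{lₘ} θ_∅`;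
this encodes the reduction relations `θ_{iiI} = −θ_I`, `θ_{ijI} = −θ_{jiI}`. -/
def thetaList {n : ℕ} (L : List (Fin n)) : SpinModule n :=
  L.foldr (fun i f => genR i f) (Pi.single (∅ : Finset (Fin n)) 1)

/-- The coordinate `Z^L` of `ψ = Σ_S Z^S θ_S` for an arbitrary multi-index `L`,
extended from subsequences of `(1,…,n)` by the relations
`θ_{iiI} = −θ_I` and `θ_{ijI} = −θ_{jiI}`. -/
noncomputable def Zcoord {n : ℕ} (ψ : SpinModule n) (L : List (Fin n)) : ℂ :=
  ∑ S : Finset (Fin n), thetaList L S * ψ S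

/-- The Plücker coordinates of a point of `G_{k,n}` given by a `k × n` matrix `M`:
the coefficient `Z^S` is the `k × k` minor of `M` on the columns `S`. -/
noncomputable def minorCoords {n k : ℕ} (M : Matrix (Fin k) (Fin n) ℂ) : SpinModule n :=
  fun S => if h : S.card = k then (M.submatrix id (S.orderEmbOfFin h)).det else 0

namespace PluckerAux

variable {n : ℕ}

noncomputable def eps (i : Fin n) (S : Finset (Fin n)) : ℂ :=
  (-1 : ℂ) ^ (S.filter (fun j => j < i)).card

lemma eps_mul_self (i : Fin n) (S : Finset (Fin n)) : eps i S * eps i S = 1 := by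
  simp [eps, ← pow_add, ← two_mul, pow_mul]

lemma cliffordSign_eq (i : Fin n) (S : Finset (Fin n)) :
    cliffordSign i S = eps i S * (if i ∈ S then 1 else -1) := rfl

lemma eps_insert {j : Fin n} {S : Finset (Fin n)} (i : Fin n) (h : j ∉ S) :
    eps i (insert j S) = (if j < i then -1 else 1) * eps i S := by
  by_cases hj : j < i
  · have : (insert j S).filter (fun x => x < i) = insert j (S.filter (fun x => x < i)) := by
      ext x; simp only [Finset.mem_filter, Finset.mem_insert]
      constructor
      · rintro ⟨h1 | h1, h2⟩ <;> simp_all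
      · rintro (rfl | ⟨h1, h2⟩) <;> simp_all
    rw [eps, this, Finset.card_insert_of_notMem (by simp [h]), pow_succ]
    simp [eps, hj, mul_comm]
  · have : (insert j S).filter (fun x => x < i) = S.filter (fun x => x < i) := by
      ext x; simp only [Finset.mem_filter, Finset.mem_insert]
      constructor
      · rintro ⟨h1 | h1, h2⟩
        · exact absurd (h1 ▸ h2) hj
        · exact ⟨h1, h2⟩
      · rintro ⟨h1, h2⟩; exact ⟨Or.inr h1, h2⟩
    rw [eps, this, if_neg hj, one_mul, eps]

lemma eps_erase {j : Fin n} {S : Finset (Fin n)} (i : Fin n) (h : j ∈ S) :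
    eps i (S.erase j) = (if j < i then -1 else 1) * eps i S := by
  have h2 : j ∉ S.erase j := Finset.notMem_erase _ _
  have h3 : S = insert j (S.erase j) := (Finset.insert_erase h).symm
  rw [h3, eps_insert i h2]
  by_cases hj : j < i <;> simp [hj]

noncomputable def Rop (i : Fin n) (f : SpinModule n) : SpinModule n :=
  fun S => if i ∈ S then eps i S * f (S.erase i) else 0

noncomputable def Lop (i : Fin n) (f : SpinModule n) : SpinModule n :=
  fun S => if i ∈ S then 0 else eps i S * f (insert i S)

lemma symmDiff_singleton_mem {S : Finset (Fin n)} {i : Fin n} (h : i ∈ S) :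
    symmDiff S {i} = S.erase i := by
  ext x; simp [Finset.mem_symmDiff, Finset.mem_erase]
  constructor
  · rintro (⟨h1, h2⟩ | ⟨rfl, h2⟩) <;> tauto
  · rintro ⟨h1, h2⟩; tauto

lemma symmDiff_singleton_not_mem {S : Finset (Fin n)} {i : Fin n} (h : i ∉ S) :
    symmDiff S {i} = insert i S := by
  ext x; simp [Finset.mem_symmDiff, Finset.mem_insert]
  constructor
  · rintro (⟨h1, h2⟩ | ⟨rfl, h2⟩) <;> tauto
  · rintro (rfl | h1)
    · tauto
    · refine Or.inl ⟨h1, fun hx => h (hx ▸ h1)⟩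

lemma genR_apply (i : Fin n) (f : SpinModule n) (S : Finset (Fin n)) :
    genR i f S = cliffordSign i S * f (symmDiff S {i}) := rfl

lemma genR_eq (i : Fin n) (f : SpinModule n) (S : Finset (Fin n)) :
    genR i f S = Rop i f S - Lop i f S := by
  by_cases h : i ∈ S
  · rw [genR_apply, symmDiff_singleton_mem h, cliffordSign_eq, Rop, Lop, if_pos h, if_pos h]
    simp [h]
  · rw [genR_apply, symmDiff_singleton_not_mem h, cliffordSign_eq, Rop, Lop, if_neg h, if_neg h]
    simp [h]

lemma sigma_anti {j a : Fin n} (h : j ≠ a) :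
    (if j < a then (-1 : ℂ) else 1) = -(if a < j then (-1 : ℂ) else 1) := by
  rcases h.lt_or_gt with h1 | h1
  · simp [h1, asymm h1]
  · simp [h1, asymm h1]

lemma Rop_Rop (j a : Fin n) (f : SpinModule n) (S : Finset (Fin n)) :
    Rop j (Rop a f) S = - Rop a (Rop j f) S := by
  rcases eq_or_ne j a with rfl | hja
  · simp [Rop, Finset.notMem_erase]
  · by_cases hj : j ∈ S <;> by_cases ha : a ∈ S
    · rw [Rop, Rop, Rop, Rop, if_pos hj, if_pos ha,
        if_pos (Finset.mem_erase.2 ⟨hja.symm, ha⟩), if_pos (Finset.mem_erase.2 ⟨hja, hj⟩),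
        eps_erase a hj, eps_erase j ha, Finset.erase_right_comm, sigma_anti hja]
      ring
    · simp [Rop, hj, ha, Finset.mem_erase]
    · simp [Rop, hj, ha, Finset.mem_erase]
    · simp [Rop, hj, ha]

lemma Lop_Lop (j a : Fin n) (f : SpinModule n) (S : Finset (Fin n)) :
    Lop j (Lop a f) S = - Lop a (Lop j f) S := by
  rcases eq_or_ne j a with rfl | hja
  · simp [Lop, Finset.mem_insert]
  · by_cases hj : j ∈ S <;> by_cases ha : a ∈ S
    · simp [Lop, hj, ha]
    · simp [Lop, hj, ha, Finset.mem_insert, hja.symm]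
    · simp [Lop, hj, ha, Finset.mem_insert, hja]
    · rw [Lop, Lop, Lop, Lop, if_neg hj, if_neg ha,
        if_neg (by simp [Finset.mem_insert, hja.symm, ha]),
        if_neg (by simp [Finset.mem_insert, hja, hj]),
        eps_insert a hj, eps_insert j ha, Finset.insert_comm, sigma_anti hja]
      ring

lemma Rop_Lop (j a : Fin n) (f : SpinModule n) (S : Finset (Fin n)) :
    Rop j (Lop a f) S + Lop a (Rop j f) S = if j = a then f S else 0 := by
  rcases eq_or_ne j a with rfl | hja
  · rw [if_pos rfl]
    by_cases h : j ∈ S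
    · simp only [Rop, Lop, if_pos h, Finset.notMem_erase, if_false, Finset.insert_erase h,
        eps_erase j h, lt_irrefl, if_neg, one_mul, add_zero]
      rw [← mul_assoc, eps_mul_self, one_mul]
    · simp only [Rop, Lop, if_neg h, if_pos (Finset.mem_insert_self j S),
        eps_insert j h, Finset.erase_insert h, lt_irrefl, if_false, one_mul, zero_add]
      linear_combination (f S) * eps_mul_self j S
  · rw [if_neg hja]
    by_cases hj : j ∈ S <;> by_cases ha : a ∈ S
    · simp [Rop, Lop, hj, ha, Finset.mem_erase, hja.symm]
    · simp only [Rop, Lop, if_pos hj, if_neg ha,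
        if_neg (fun hmem => ha (Finset.mem_of_mem_erase hmem)),
        if_pos (Finset.mem_insert_of_mem hj),
        eps_erase a hj, eps_insert j ha, ← Finset.erase_insert_of_ne hja.symm,
        sigma_anti hja]
      ring
    · simp [Rop, Lop, hj, ha]
    · simp [Rop, Lop, hj, ha, Finset.mem_insert, hja]

lemma Lop_Rop (j a : Fin n) (f : SpinModule n) (S : Finset (Fin n)) :
    Lop j (Rop a f) S + Rop a (Lop j f) S = if j = a then f S else 0 := by
  rcases eq_or_ne j a with rfl | hja
  · rw [if_pos rfl]
    by_cases h : j ∈ S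
    · simp only [Lop, Rop, if_pos h, Finset.notMem_erase, if_false, Finset.insert_erase h,
        eps_erase j h, lt_irrefl, if_neg, one_mul, zero_add]
      rw [← mul_assoc, eps_mul_self, one_mul]
    · simp only [Lop, Rop, if_neg h, if_pos (Finset.mem_insert_self j S),
        eps_insert j h, Finset.erase_insert h, lt_irrefl, if_false, one_mul, add_zero]
      linear_combination (f S) * eps_mul_self j S
  · rw [if_neg hja]
    by_cases hj : j ∈ S <;> by_cases ha : a ∈ S
    · simp [Rop, Lop, hj, ha, Finset.mem_erase, hja]
    · simp [Rop, Lop, hj, ha, Finset.mem_erase, hja]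
    · simp only [Lop, Rop, if_neg hj, if_pos ha,
        if_pos (Finset.mem_insert_of_mem ha),
        if_neg (fun hmem => hj (Finset.mem_of_mem_erase hmem)),
        eps_insert a hj, eps_erase j ha, Finset.erase_insert_of_ne hja,
        sigma_anti hja]
      ring
    · simp [Rop, Lop, hj, ha, Finset.mem_insert, hja.symm]

lemma Rop_sub (j : Fin n) (g h : SpinModule n) (S : Finset (Fin n)) :
    Rop j (fun X => g X - h X) S = Rop j g S - Rop j h S := by
  by_cases hj : j ∈ S <;> simp [Rop, hj, mul_sub]

lemma Lop_sub (j : Fin n) (g h : SpinModule n) (S : Finset (Fin n)) :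
    Lop j (fun X => g X - h X) S = Lop j g S - Lop j h S := by
  by_cases hj : j ∈ S <;> simp [Lop, hj, mul_sub]

lemma P1 (j a : Fin n) (f : SpinModule n) (S : Finset (Fin n)) :
    Rop j (genR a f) S = -genR a (Rop j f) S - (if j = a then f S else 0) := by
  have hfun : (genR a f : SpinModule n) = fun X => Rop a f X - Lop a f X :=
    funext fun X => genR_eq a f X
  rw [hfun, Rop_sub, genR_eq]
  linear_combination Rop_Rop j a f S - Rop_Lop j a f S

lemma P2 (j b : Fin n) (f : SpinModule n) (S : Finset (Fin n)) :
    Lop j (genR b f) S = -genR b (Lop j f) S + (if j = b then f S else 0) := by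
  have hfun : (genR b f : SpinModule n) = fun X => Rop b f X - Lop b f X :=
    funext fun X => genR_eq b f X
  rw [hfun, Lop_sub, genR_eq]
  linear_combination Lop_Rop j b f S - Lop_Lop j b f S

lemma cliffordSign_symmDiff (i : Fin n) (S : Finset (Fin n)) :
    cliffordSign i (symmDiff S {i}) = -cliffordSign i S := by
  by_cases h : i ∈ S
  · rw [symmDiff_singleton_mem h, cliffordSign_eq, cliffordSign_eq, eps_erase i h,
      if_neg (lt_irrefl i), one_mul, if_neg (Finset.notMem_erase i S), if_pos h]
    ring
  · rw [symmDiff_singleton_not_mem h, cliffordSign_eq, cliffordSign_eq, eps_insert i h,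
      if_neg (lt_irrefl i), one_mul, if_pos (Finset.mem_insert_self i S), if_neg h]
    ring

lemma Zcoord_cons (ψ : SpinModule n) (i : Fin n) (L : List (Fin n)) :
    Zcoord ψ (i :: L) = - Zcoord (genR i ψ) L := by
  unfold Zcoord
  have h1 : thetaList (i :: L) = genR i (thetaList L) := rfl
  rw [h1, ← Finset.sum_neg_distrib]
  exact Fintype.sum_equiv
    (Function.Involutive.toPerm (fun S => symmDiff S {i})
      (fun S => symmDiff_symmDiff_cancel_right {i} S))
    _ _ (fun S => by
      show genR i (thetaList L) S * ψ S = -(thetaList L (symmDiff S {i}) * genR i ψ (symmDiff S {i}))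
      rw [genR_apply, genR_apply, cliffordSign_symmDiff, symmDiff_symmDiff_cancel_right]
      ring)

lemma thetaList_nodup : ∀ {L : List (Fin n)}, L.Nodup →
    ∃ ε : ℂ, ε * ε = 1 ∧ ∀ S, thetaList L S = if S = L.toFinset then ε else 0 := by
  intro L
  induction L with
  | nil =>
    intro _
    exact ⟨1, by norm_num, fun S => by simp [thetaList, Pi.single_apply]; congr⟩
  | cons i L ih =>
    intro hnd
    obtain ⟨hi, hL⟩ := List.nodup_cons.1 hnd
    obtain ⟨ε, hε2, hθ⟩ := ih hL
    have hiT : i ∉ L.toFinset := by simpa [List.mem_toFinset] using hi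
    refine ⟨cliffordSign i (insert i L.toFinset) * ε, ?_, fun S => ?_⟩
    · rw [cliffordSign_eq, if_pos (Finset.mem_insert_self i _), mul_one]
      linear_combination (ε * ε) * eps_mul_self i (insert i L.toFinset) + hε2
    · have h1 : thetaList (i :: L) S = cliffordSign i S * thetaList L (symmDiff S {i}) := rfl
      rw [h1, hθ, List.toFinset_cons]
      by_cases hS : S = insert i L.toFinset
      · subst hS
        rw [if_pos rfl, symmDiff_singleton_mem (Finset.mem_insert_self i _),
          Finset.erase_insert hiT, if_pos rfl]
      · rw [if_neg hS, if_neg, mul_zero]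
        intro hc
        apply hS
        have := congrArg (fun X => symmDiff X ({i} : Finset (Fin n))) hc
        rwa [symmDiff_symmDiff_cancel_right, symmDiff_singleton_not_mem hiT] at this

variable {k : ℕ}

lemma minor_support (M : Matrix (Fin k) (Fin n) ℂ) {S : Finset (Fin n)} (h : S.card ≠ k) :
    minorCoords M S = 0 := dif_neg h

lemma minor_eq (M : Matrix (Fin k) (Fin n) ℂ) {S : Finset (Fin n)} (h : S.card = k)
    {f : Fin k → Fin n} (hf : ∀ x, f x ∈ S) (hmono : StrictMono f) :
    minorCoords M S = (M.submatrix id f).det := by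
  have : f = ⇑(S.orderEmbOfFin h) := Finset.orderEmbOfFin_unique h hf hmono
  rw [minorCoords, dif_pos h, ← this]

lemma posCard {W : Finset (Fin n)} {l : ℕ} (hW : W.card = l) (c : Fin l) :
    (W.filter (fun x => x < W.orderEmbOfFin hW c)).card = c := by
  have himg : W.filter (fun x => x < W.orderEmbOfFin hW c)
      = (Finset.univ.filter (fun d : Fin l => d < c)).image (W.orderEmbOfFin hW) := by
    ext x
    simp only [Finset.mem_filter, Finset.mem_image, Finset.mem_univ, true_and]
    constructor
    · rintro ⟨hxW, hxlt⟩
      have hx : x ∈ Set.range (W.orderEmbOfFin hW) := by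
        rw [Finset.range_orderEmbOfFin]; exact hxW
      obtain ⟨d, rfl⟩ := hx
      exact ⟨d, (W.orderEmbOfFin hW).lt_iff_lt.1 hxlt, rfl⟩
    · rintro ⟨d, hd, rfl⟩
      exact ⟨Finset.orderEmbOfFin_mem _ _ _, (W.orderEmbOfFin hW).lt_iff_lt.2 hd⟩
  rw [himg, Finset.card_image_of_injective _ (W.orderEmbOfFin hW).injective]
  have : Finset.univ.filter (fun d : Fin l => d < c) = Finset.Iio c := by
    ext d; simp
  rw [this, Fin.card_Iio]

lemma eps_orderEmbOfFin {W : Finset (Fin n)} {l : ℕ} (hW : W.card = l) (c : Fin l) :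
    eps (W.orderEmbOfFin hW c) W = (-1 : ℂ) ^ (c : ℕ) := by
  rw [eps, posCard hW c]

lemma lemA (M : Matrix (Fin k) (Fin n) ℂ) (U V : Finset (Fin n)) :
    ∑ j : Fin n, Rop j (minorCoords M) U * Lop j (minorCoords M) V = 0 := by
  by_cases hU : U.card = k + 1
  swap
  · apply Finset.sum_eq_zero; intro j _
    rw [Rop]
    by_cases hj : j ∈ U
    · rw [if_pos hj, minor_support]
      · ring
      · have h1 : 1 ≤ U.card := Finset.card_pos.2 ⟨j, hj⟩
        rw [Finset.card_erase_of_mem hj]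
        omega
    · rw [if_neg hj, zero_mul]
  by_cases hV : V.card + 1 = k
  swap
  · apply Finset.sum_eq_zero; intro j _
    rw [Lop]
    by_cases hj : j ∈ V
    · rw [if_pos hj, mul_zero]
    · rw [if_neg hj, minor_support]
      · ring
      · rw [Finset.card_insert_of_notMem hj]; exact hV
  · subst hV
    have hU' : U.card = V.card + 2 := hU
    set u := U.orderEmbOfFin hU' with hu
    have humem : ∀ c, u c ∈ U := fun c => Finset.orderEmbOfFin_mem _ _ _
    set vemb := V.orderEmbOfFin rfl with hv
    set D : Fin (V.card + 1) → ℂ := fun i => (M.submatrix i.succAbove vemb).det with hD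
    -- L2 : the L-side is a fixed linear combination of matrix entries
    have hL2 : ∀ j : Fin n,
        Lop j (minorCoords M) V = ∑ i : Fin (V.card + 1), (-1 : ℂ) ^ (i : ℕ) * M i j * D i := by
      intro j
      have hdet : (M.submatrix id (Fin.cases j vemb)).det
          = ∑ i : Fin (V.card + 1), (-1 : ℂ) ^ (i : ℕ) * M i j * D i := by
        rw [Matrix.det_succ_column_zero]
        apply Finset.sum_congr rfl
        intro i _
        rw [show (M.submatrix id (Fin.cases j ⇑vemb)).submatrix i.succAbove Fin.succ
            = M.submatrix i.succAbove ⇑vemb from by ext r c; simp [Matrix.submatrix_apply]]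
        rfl
      by_cases hj : j ∈ V
      · rw [Lop, if_pos hj, ← hdet]
        obtain ⟨c0, hc0⟩ : ∃ c0, vemb c0 = j := by
          have hx : j ∈ Set.range vemb := by rw [hv, Finset.range_orderEmbOfFin]; exact hj
          exact hx
        symm
        apply Matrix.det_zero_of_column_eq (Fin.succ_ne_zero c0).symm
        intro r
        simp [Matrix.submatrix_apply, hc0]
      · rw [Lop, if_neg hj, ← hdet]
        have hcard : (insert j V).card = V.card + 1 := Finset.card_insert_of_notMem hj
        set wemb := (insert j V).orderEmbOfFin hcard with hw
        obtain ⟨p, hp⟩ : ∃ p, wemb p = j := by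
          have hx : j ∈ Set.range wemb := by
            rw [hw, Finset.range_orderEmbOfFin]; exact Finset.mem_insert_self j V
          exact hx
        have hvw : ∀ c, vemb c = wemb (p.succAbove c) := by
          have heq : (fun c => wemb (p.succAbove c)) = ⇑(V.orderEmbOfFin rfl) := by
            apply Finset.orderEmbOfFin_unique
            · intro x
              have h1 : wemb (p.succAbove x) ∈ insert j V := Finset.orderEmbOfFin_mem _ _ _
              have h2 : wemb (p.succAbove x) ≠ j := by
                rw [← hp]
                exact fun hc => Fin.succAbove_ne p x (wemb.injective hc)
              rcases Finset.mem_insert.1 h1 with h | h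
              · exact absurd h h2
              · exact h
            · exact wemb.strictMono.comp (Fin.strictMono_succAbove p)
          intro c
          exact (congrFun heq c).symm
        have hcol : (Fin.cases j vemb : Fin (V.card + 1) → Fin n)
            = fun c => wemb (p.cycleRange.symm c) := by
          funext c
          cases c using Fin.cases with
          | zero => rw [Fin.cases_zero, Fin.cycleRange_symm_zero, hp]
          | succ c' => rw [Fin.cases_succ, Fin.cycleRange_symm_succ, hvw]
        have hsub : M.submatrix id (fun c => wemb (p.cycleRange.symm c))
            = (M.submatrix id wemb).submatrix id ⇑(p.cycleRange.symm) := rfl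
        have hψins : (minorCoords M) (insert j V) = (M.submatrix id wemb).det := by
          rw [minorCoords, dif_pos hcard]
        rw [hcol, hsub, Matrix.det_permute', hψins]
        have hepsj : eps j V = (-1 : ℂ) ^ (p : ℕ) := by
          have h1 : V.filter (fun x => x < j) = (insert j V).filter (fun x => x < wemb p) := by
            rw [hp]
            ext x
            simp only [Finset.mem_filter, Finset.mem_insert]
            constructor
            · rintro ⟨h1, h2⟩; exact ⟨Or.inr h1, h2⟩
            · rintro ⟨rfl | h1, h2⟩
              · exact absurd h2 (lt_irrefl _)
              · exact ⟨h1, h2⟩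
          rw [eps, h1, posCard hcard p]
        have hsign : Equiv.Perm.sign p.cycleRange.symm = (-1 : ℤˣ) ^ (p : ℕ) := by
          rw [← Equiv.Perm.inv_def, map_inv, Fin.sign_cycleRange]
          simp
        rw [hepsj, hsign]
        push_cast
        ring
    -- L1 : alternating sum along U vanishes
    have hL1 : ∀ i : Fin (V.card + 1),
        ∑ c : Fin (V.card + 2), (-1 : ℂ) ^ (c : ℕ) * M i (u c) * (minorCoords M) (U.erase (u c)) = 0 := by
      intro i
      have hB : (M.submatrix (Fin.cases i id) u).det = 0 := by
        apply Matrix.det_zero_of_row_eq (Fin.succ_ne_zero i).symm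
        funext c
        simp [Matrix.submatrix_apply]
      have h2 : (M.submatrix (Fin.cases i id) u).det
          = ∑ c : Fin (V.card + 2), (-1 : ℂ) ^ (c : ℕ) * M i (u c) * (minorCoords M) (U.erase (u c)) := by
        rw [Matrix.det_succ_row_zero]
        apply Finset.sum_congr rfl
        intro c _
        have hcard' : (U.erase (u c)).card = V.card + 1 := by
          rw [Finset.card_erase_of_mem (humem c), hU']
          omega
        have hf : ∀ x, (fun c' => u (c.succAbove c')) x ∈ U.erase (u c) := fun x =>
          Finset.mem_erase.2 ⟨fun hc => Fin.succAbove_ne c x (u.injective hc), humem _⟩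
        have hmono : StrictMono (fun c' => u (c.succAbove c')) :=
          u.strictMono.comp (Fin.strictMono_succAbove c)
        rw [minor_eq M hcard' hf hmono,
          show (M.submatrix (Fin.cases i id) ⇑u).submatrix Fin.succ c.succAbove
            = M.submatrix id (fun c' => u (c.succAbove c')) from by
              ext r c'; simp [Matrix.submatrix_apply]]
        rfl
      rw [← h2, hB]
    -- assembly
    have step1 : ∑ j : Fin n, Rop j (minorCoords M) U * Lop j (minorCoords M) V = ∑ j ∈ U, Rop j (minorCoords M) U * Lop j (minorCoords M) V := by
      symm
      apply Finset.sum_subset (Finset.subset_univ U)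
      intro x _ hx
      rw [Rop, if_neg hx, zero_mul]
    have himg : Finset.image u Finset.univ = U := by
      ext x
      simp only [Finset.mem_image, Finset.mem_univ, true_and]
      constructor
      · rintro ⟨c, rfl⟩; exact humem c
      · intro hx
        have hx' : x ∈ Set.range u := by rw [hu, Finset.range_orderEmbOfFin]; exact hx
        exact hx'
    have step2 : ∑ j ∈ U, Rop j (minorCoords M) U * Lop j (minorCoords M) V
        = ∑ c : Fin (V.card + 2), Rop (u c) (minorCoords M) U * Lop (u c) (minorCoords M) V := by
      rw [← himg, Finset.sum_image (fun x _ y _ h => u.injective h)]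
    rw [step1, step2]
    have step3 : ∀ c : Fin (V.card + 2), Rop (u c) (minorCoords M) U * Lop (u c) (minorCoords M) V
        = ∑ i : Fin (V.card + 1),
            (-1 : ℂ) ^ (i : ℕ) * D i * ((-1 : ℂ) ^ (c : ℕ) * M i (u c) * (minorCoords M) (U.erase (u c))) := by
      intro c
      rw [Rop, if_pos (humem c), hL2 (u c), hu, eps_orderEmbOfFin hU' c, Finset.mul_sum]
      apply Finset.sum_congr rfl
      intro i _
      ring
    rw [Finset.sum_congr rfl (fun c _ => step3 c), Finset.sum_comm]
    apply Finset.sum_eq_zero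
    intro i _
    rw [← Finset.mul_sum, hL1 i, mul_zero]

lemma cliffordSign_mul_self (i : Fin n) (S : Finset (Fin n)) :
    cliffordSign i S * cliffordSign i S = 1 := by
  by_cases h : i ∈ S
  · rw [cliffordSign_eq, if_pos h, mul_one, eps_mul_self]
  · rw [cliffordSign_eq, if_neg h]
    linear_combination eps_mul_self i S

lemma genR_genR_self (i : Fin n) (f : SpinModule n) (S : Finset (Fin n)) :
    genR i (genR i f) S = -f S := by
  rw [genR_apply, genR_apply, symmDiff_symmDiff_cancel_right, cliffordSign_symmDiff]
  have := cliffordSign_mul_self i S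
  linear_combination (-f S) * this

lemma Q1 (M : Matrix (Fin k) (Fin n) ℂ) {S : Finset (Fin n)} (hS : S.card = k) (a b : Fin n) :
    genR a (Rop b (minorCoords M)) S
      = (if a ∈ S then 0 else 1) * genR a (genR b (minorCoords M)) S := by
  by_cases ha : a ∈ S
  · rw [if_pos ha, zero_mul, genR_apply, symmDiff_singleton_mem ha, Rop]
    by_cases hb : b ∈ S.erase a
    · rw [if_pos hb, minor_support]
      · ring
      · rw [Finset.card_erase_of_mem hb, Finset.card_erase_of_mem ha, hS]
        have h1 : 1 ≤ S.card := Finset.card_pos.2 ⟨a, ha⟩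
        have h2 : b ∈ S.erase a := hb
        have h3 : 1 ≤ (S.erase a).card := Finset.card_pos.2 ⟨b, hb⟩
        rw [Finset.card_erase_of_mem ha, hS] at h3
        omega
    · rw [if_neg hb, mul_zero]
  · rw [if_neg ha, one_mul, genR_apply, genR_apply, symmDiff_singleton_not_mem ha]
    congr 1
    have hL : Lop b (minorCoords M) (insert a S) = 0 := by
      by_cases hb : b ∈ insert a S
      · rw [Lop, if_pos hb]
      · rw [Lop, if_neg hb, minor_support]
        · ring
        · rw [Finset.card_insert_of_notMem hb, Finset.card_insert_of_notMem ha, hS]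
          omega
    rw [genR_eq, hL, sub_zero]

lemma Q2 (M : Matrix (Fin k) (Fin n) ℂ) {T : Finset (Fin n)} (hT : T.card = k) (a b : Fin n) :
    genR b (Lop a (minorCoords M)) T
      = (if a ∈ T then 0 else 1) * genR a (genR b (minorCoords M)) T
        + (if a = b then minorCoords M T else 0) := by
  rcases eq_or_ne a b with rfl | hab
  · rw [if_pos rfl]
    by_cases ha : a ∈ T
    · rw [if_pos ha, zero_mul, zero_add, genR_apply, symmDiff_singleton_mem ha, Lop,
        if_neg (Finset.notMem_erase a T), eps_erase a ha, if_neg (lt_irrefl a), one_mul,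
        Finset.insert_erase ha, cliffordSign_eq, if_pos ha, mul_one, ← mul_assoc, eps_mul_self,
        one_mul]
    · rw [if_neg ha, one_mul, genR_genR_self, genR_apply, symmDiff_singleton_not_mem ha, Lop,
        if_pos (Finset.mem_insert_self a T), mul_zero]
      ring
  · rw [if_neg hab, add_zero]
    by_cases ha : a ∈ T
    · rw [if_pos ha, zero_mul]
      by_cases hb : b ∈ T
      · rw [genR_apply, symmDiff_singleton_mem hb, Lop,
          if_pos (Finset.mem_erase.2 ⟨hab, ha⟩), mul_zero]
      · rw [genR_apply, symmDiff_singleton_not_mem hb, Lop,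
          if_pos (Finset.mem_insert_of_mem ha), mul_zero]
    · rw [if_neg ha, one_mul]
      by_cases hb : b ∈ T
      · have hanotin : a ∉ T.erase b := fun hc => ha (Finset.mem_of_mem_erase hc)
        have hbmem : b ∈ insert a T := Finset.mem_insert_of_mem hb
        rw [genR_apply, symmDiff_singleton_mem hb, Lop, if_neg hanotin, genR_apply,
          symmDiff_singleton_not_mem ha, genR_apply, symmDiff_singleton_mem hbmem,
          cliffordSign_eq, if_pos hb, mul_one, cliffordSign_eq, if_neg ha,
          cliffordSign_eq, if_pos hbmem, mul_one,
          eps_erase a hb, eps_insert b ha, Finset.erase_insert_of_ne hab,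
          sigma_anti hab.symm]
        ring
      · have h1 : a ∉ insert b T := by
          intro hc; rcases Finset.mem_insert.1 hc with h | h
          · exact hab h
          · exact ha h
        have h2 : b ∉ insert a T := by
          intro hc; rcases Finset.mem_insert.1 hc with h | h
          · exact hab h.symm
          · exact hb h
        rw [genR_apply, symmDiff_singleton_not_mem hb, Lop, if_neg h1, genR_apply,
          symmDiff_singleton_not_mem ha, genR_apply, symmDiff_singleton_not_mem h2,
          minor_support M (S := insert a (insert b T)), minor_support M (S := insert b (insert a T))]
        · ring
        · rw [Finset.card_insert_of_notMem h2, Finset.card_insert_of_notMem ha, hT]; omega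
        · rw [Finset.card_insert_of_notMem h1, Finset.card_insert_of_notMem hb, hT]; omega

lemma master (M : Matrix (Fin k) (Fin n) ℂ) {S T : Finset (Fin n)}
    (hS : S.card = k) (hT : T.card = k) (a b : Fin n) :
    ∑ j ∈ S \ T, genR j (genR a (minorCoords M)) S * genR j (genR b (minorCoords M)) T
      = -(if a ∉ T then (1 : ℂ) else 0) * minorCoords M S
            * genR a (genR b (minorCoords M)) T
        + (if a ∉ S then (1 : ℂ) else 0) * genR a (genR b (minorCoords M)) S
            * minorCoords M T := by
  set ψ := minorCoords M with hψ
  have key : ∀ j ∈ S \ T, genR j (genR a ψ) S * genR j (genR b ψ) T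
      = -(Rop j (genR a ψ) S * Lop j (genR b ψ) T) := by
    intro j hj
    obtain ⟨hjS, hjT⟩ := Finset.mem_sdiff.1 hj
    rw [genR_eq j (genR a ψ), genR_eq j (genR b ψ),
      show Lop j (genR a ψ) S = 0 from by rw [Lop, if_pos hjS],
      show Rop j (genR b ψ) T = 0 from by rw [Rop, if_neg hjT]]
    ring
  rw [Finset.sum_congr rfl key]
  have ext1 : ∑ j ∈ S \ T, -(Rop j (genR a ψ) S * Lop j (genR b ψ) T)
      = ∑ j : Fin n, -(Rop j (genR a ψ) S * Lop j (genR b ψ) T) := by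
    apply Finset.sum_subset (Finset.subset_univ _)
    intro j _ hj
    by_cases hjS : j ∈ S
    · have hjT : j ∈ T := by
        by_contra hjT
        exact hj (Finset.mem_sdiff.2 ⟨hjS, hjT⟩)
      rw [Lop, if_pos hjT]
      ring
    · rw [Rop, if_neg hjS]
      ring
  rw [ext1]
  have expand : ∀ j : Fin n, -(Rop j (genR a ψ) S * Lop j (genR b ψ) T)
      = -(genR a (Rop j ψ) S * genR b (Lop j ψ) T)
        + ((if j = b then genR a (Rop j ψ) S * ψ T else 0)
        + (-(if j = a then ψ S * genR b (Lop j ψ) T else 0)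
        + (if j = a then (if j = b then ψ S * ψ T else 0) else 0))) := by
    intro j
    rw [P1, P2]
    by_cases h1 : j = a
    · subst h1
      by_cases h2 : j = b
      · subst h2; simp <;> try ring
      · simp [h2] <;> try ring
    · by_cases h2 : j = b
      · subst h2; simp [h1] <;> try ring
      · simp [h1, h2] <;> try ring
  rw [Finset.sum_congr rfl (fun j _ => expand j), Finset.sum_add_distrib,
    Finset.sum_add_distrib, Finset.sum_add_distrib]
  have s1 : ∑ j : Fin n, -(genR a (Rop j ψ) S * genR b (Lop j ψ) T) = 0 := by
    have h1 : ∀ j : Fin n, -(genR a (Rop j ψ) S * genR b (Lop j ψ) T)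
        = -(cliffordSign a S * cliffordSign b T)
            * (Rop j ψ (symmDiff S {a}) * Lop j ψ (symmDiff T {b})) := by
      intro j
      rw [genR_apply, genR_apply]
      ring
    rw [Finset.sum_congr rfl (fun j _ => h1 j), ← Finset.mul_sum, lemA, mul_zero]
  rw [s1, zero_add]
  have s2 : ∑ j : Fin n, (if j = b then genR a (Rop j ψ) S * ψ T else 0)
      = genR a (Rop b ψ) S * ψ T := by
    simp [Finset.sum_ite_eq', Finset.mem_univ]
  have s3 : ∑ j : Fin n, -(if j = a then ψ S * genR b (Lop j ψ) T else 0)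
      = -(ψ S * genR b (Lop a ψ) T) := by
    have h0 : ∀ j : Fin n, -(if j = a then ψ S * genR b (Lop j ψ) T else 0)
        = (if j = a then -(ψ S * genR b (Lop j ψ) T) else 0) := by
      intro j; split <;> simp
    rw [Finset.sum_congr rfl (fun j _ => h0 j)]
    simp [Finset.sum_ite_eq', Finset.mem_univ]
  have s4 : ∑ j : Fin n, (if j = a then (if j = b then ψ S * ψ T else 0) else 0)
      = (if a = b then ψ S * ψ T else 0) := by
    simp [Finset.sum_ite_eq', Finset.mem_univ]
  rw [s2, s3, s4, Q1 M hS a b, Q2 M hT a b]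
  rcases eq_or_ne a b with rfl | hab
  · by_cases ha1 : a ∈ S <;> by_cases ha2 : a ∈ T <;>
      simp [ha1, ha2, mul_ite, ite_mul, mul_zero, zero_mul, ← hψ] <;> try ring
  · by_cases ha1 : a ∈ S <;> by_cases ha2 : a ∈ T <;>
      simp [ha1, ha2, hab, mul_ite, ite_mul, mul_zero, zero_mul, ← hψ] <;> try ring

end PluckerAux

open PluckerAux in
/-- Plücker relation, form (3) of Lemma 3.5: for Plücker coordinates `Z` of a rank-`k`
`k × n` matrix, multi-indices `J`, `K` of length `k` and any `a`, `b`,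
`Σ_{j ∈ J\K} Z^{ajJ} Z^{bjK} = −δ(a∉K)·Z^J·Z^{baK} + δ(a∉J)·Z^{baJ}·Z^K`. -/
theorem plucker_relation_three (n k : ℕ)
    (M : Matrix (Fin k) (Fin n) ℂ) (hM : M.rank = k)
    (J K : List (Fin n)) (hJ : J.Nodup) (hK : K.Nodup)
    (hJl : J.length = k) (hKl : K.length = k) (a b : Fin n) :
    ∑ j ∈ J.toFinset \ K.toFinset,
        Zcoord (minorCoords M) (a :: j :: J) * Zcoord (minorCoords M) (b :: j :: K)
      = -(if a ∉ K.toFinset then (1 : ℂ) else 0)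
            * Zcoord (minorCoords M) J * Zcoord (minorCoords M) (b :: a :: K)
        + (if a ∉ J.toFinset then (1 : ℂ) else 0)
            * Zcoord (minorCoords M) (b :: a :: J) * Zcoord (minorCoords M) K := by
  classical
  obtain ⟨εJ, hεJ, hθJ⟩ := thetaList_nodup hJ
  obtain ⟨εK, hεK, hθK⟩ := thetaList_nodup hK
  have hZJ : ∀ φ : SpinModule n, Zcoord φ J = εJ * φ J.toFinset := by
    intro φ
    unfold Zcoord
    rw [Finset.sum_congr rfl (fun S _ => by rw [hθJ S])]
    simp [ite_mul, zero_mul, Finset.sum_ite_eq', Finset.mem_univ]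
  have hZK : ∀ φ : SpinModule n, Zcoord φ K = εK * φ K.toFinset := by
    intro φ
    unfold Zcoord
    rw [Finset.sum_congr rfl (fun S _ => by rw [hθK S])]
    simp [ite_mul, zero_mul, Finset.sum_ite_eq', Finset.mem_univ]
  have hJcard : J.toFinset.card = k := by rw [List.toFinset_card_of_nodup hJ, hJl]
  have hKcard : K.toFinset.card = k := by rw [List.toFinset_card_of_nodup hK, hKl]
  have hstep : ∀ (φ : SpinModule n) (x y : Fin n) (L : List (Fin n)),
      Zcoord φ (x :: y :: L) = Zcoord (genR y (genR x φ)) L := by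
    intro φ x y L
    rw [Zcoord_cons, Zcoord_cons, neg_neg]
  calc ∑ j ∈ J.toFinset \ K.toFinset,
        Zcoord (minorCoords M) (a :: j :: J) * Zcoord (minorCoords M) (b :: j :: K)
      = (εJ * εK) * ∑ j ∈ J.toFinset \ K.toFinset,
          genR j (genR a (minorCoords M)) J.toFinset
            * genR j (genR b (minorCoords M)) K.toFinset := by
        rw [Finset.mul_sum]
        apply Finset.sum_congr rfl
        intro j _
        rw [hstep, hstep, hZJ, hZK]
        ring
    _ = (εJ * εK) *
          (-(if a ∉ K.toFinset then (1 : ℂ) else 0) * minorCoords M J.toFinset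
              * genR a (genR b (minorCoords M)) K.toFinset
            + (if a ∉ J.toFinset then (1 : ℂ) else 0)
              * genR a (genR b (minorCoords M)) J.toFinset * minorCoords M K.toFinset) := by
        rw [master M hJcard hKcard a b]
    _ = -(if a ∉ K.toFinset then (1 : ℂ) else 0)
            * Zcoord (minorCoords M) J * Zcoord (minorCoords M) (b :: a :: K)
        + (if a ∉ J.toFinset then (1 : ℂ) else 0)
            * Zcoord (minorCoords M) (b :: a :: J) * Zcoord (minorCoords M) K := by
        rw [hstep (minorCoords M) b a K, hstep (minorCoords M) b a J, hZJ, hZK, hZJ, hZK]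
        ring
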